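/- For the polynomial f = (y^3 - x^4)^5 + x^2 y^{15}, the monodromy zeta function ζ(T) = (T^{330}-1)(T^{60}-1)/((T^{66}-1)(T^{15}-1)(T^{20}-1)) has exp(2πi/110) as a root of its numerator not cancelled by the denominator; hence exp(2πi/110) is a monodromy eigenvalue. -/

import Mathlib

lemma aux_pow (k : ℕ) :
    (Complex.exp (2 * Real.pi * Complex.I / 110)) ^ k = 1 ↔ (110 : ℤ) ∣ (k : ℤ) := by
  rw [← Complex.exp_nat_mul, Complex.exp_eq_one_iff]
  have h2 : (2 : ℂ) * Real.pi * Complex.I ≠ 0 := by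
    simp [Real.pi_ne_zero, Complex.I_ne_zero]
  constructor
  · rintro ⟨n, hn⟩
    refine ⟨n, ?_⟩
    have : (k : ℂ) = n * 110 := by
      field_simp at hn
      have := mul_right_cancel₀ h2 (by linear_combination (2 * Real.pi * Complex.I) * hn :
        (k : ℂ) * (2 * Real.pi * Complex.I) = (n * 110) * (2 * Real.pi * Complex.I))
      exact this
    have h' : (k:ℤ) = n*110 := by exact_mod_cast this
    omega
  · rintro ⟨n, hn⟩
    refine ⟨n, ?_⟩
    have hk : (k : ℂ) = 110 * n := by exact_mod_cast congrArg (Int.cast : ℤ → ℂ) hn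
    rw [hk]; field_simp

/-- For `f = (y³-x⁴)⁵ + x²y¹⁵`, with `λ = exp(2πi/110)`:
`λ³³⁰ = 1` while `λ⁶⁶ ≠ 1`, `λ¹⁵ ≠ 1`, `λ²⁰ ≠ 1` and `λ⁶⁰ ≠ 1`; hence `λ` is a simple
zero of the numerator `(T³³⁰-1)(T⁶⁰-1)` of the monodromy zeta function, not cancelled
by the denominator `(T⁶⁶-1)(T¹⁵-1)(T²⁰-1)`, so `λ` is a monodromy eigenvalue. -/
theorem stmt_8 :
    (Complex.exp (2 * Real.pi * Complex.I / 110)) ^ 330 = 1 ∧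
    (Complex.exp (2 * Real.pi * Complex.I / 110)) ^ 66 ≠ 1 ∧
    (Complex.exp (2 * Real.pi * Complex.I / 110)) ^ 15 ≠ 1 ∧
    (Complex.exp (2 * Real.pi * Complex.I / 110)) ^ 20 ≠ 1 ∧
    (Complex.exp (2 * Real.pi * Complex.I / 110)) ^ 60 ≠ 1 := by
  refine ⟨(aux_pow 330).2 (by decide), fun h => ?_, fun h => ?_, fun h => ?_, fun h => ?_⟩
  · exact absurd ((aux_pow 66).1 h) (by decide)
  · exact absurd ((aux_pow 15).1 h) (by decide)
  · exact absurd ((aux_pow 20).1 h) (by decide)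
  · exact absurd ((aux_pow 60).1 h) (by decide)
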